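/- Let G be a finite simple undirected graph with eigenvalues λ_1 ≥ λ_2 ≥ ⋯ ≥ λ_n and spectral radius ρ = λ_1, and let m_k = Σ_{l=1}^n α_l λ_l^k be a spectral moment sequence of G with nonnegative weights α_l, where α_1 is the weight attached to λ_1. Then for every finite set J = {j_1, …, j_s} ⊂ ℕ, the s×s matrix whose (a,b) entry is ρ·(m_{j_a+j_b} − α_1·ρ^{j_a+j_b}) + (m_{j_a+j_b+1} − α_1·ρ^{j_a+j_b+1}) is positive semidefinite. -/

import Mathlib

open Matrix Finset

/-- Theorem 4.9 of the paper (Stieltjes-type conditions): for a spectral moment sequence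
with weight `α₁` at `λ₁ = ρ`, the matrix with entries
`ρ (m_{j_a+j_b} - α₁ ρ^{j_a+j_b}) + (m_{j_a+j_b+1} - α₁ ρ^{j_a+j_b+1})` indexed by any
finite set `J ⊂ ℕ` is positive semidefinite. -/
theorem stmt_16 (n : ℕ) (hn : 1 ≤ n) (G : SimpleGraph (Fin n)) [DecidableRel G.Adj]
    (lam : Fin n → ℝ) (hlam : Antitone lam)
    (U : Matrix (Fin n) (Fin n) ℝ)
    (hU : Uᵀ * U = 1)
    (hAU : G.adjMatrix ℝ * U = U * Matrix.diagonal lam)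
    (rho : ℝ) (hrho : IsGreatest (Set.range fun l => |lam l|) rho)
    (α : Fin n → ℝ) (hα : ∀ l, 0 ≤ α l)
    (m : ℕ → ℝ) (hm : ∀ k, m k = ∑ l, α l * lam l ^ k) :
    ∀ J : Finset ℕ, (Matrix.of fun a b : J =>
      rho * (m (a.1 + b.1) - α ⟨0, hn⟩ * rho ^ (a.1 + b.1)) +
        (m (a.1 + b.1 + 1) - α ⟨0, hn⟩ * rho ^ (a.1 + b.1 + 1))).PosSemidef := by
  set A := G.adjMatrix ℝ with hA
  set i0 : Fin n := ⟨0, hn⟩ with hi0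
  have hUU : U * Uᵀ = 1 := mul_eq_one_comm.mp hU
  have hdot : ∀ y z : Fin n → ℝ, (U *ᵥ y) ⬝ᵥ (U *ᵥ z) = y ⬝ᵥ z := by
    intro y z
    rw [Matrix.dotProduct_mulVec, ← Matrix.mulVec_transpose, Matrix.mulVec_mulVec, hU,
      Matrix.one_mulVec]
  have hray : ∀ x : Fin n → ℝ, x ⬝ᵥ (A *ᵥ x) ≤ lam i0 * (x ⬝ᵥ x) := by
    intro x
    obtain ⟨y, hx⟩ : ∃ y, U *ᵥ y = x :=
      ⟨Uᵀ *ᵥ x, by rw [Matrix.mulVec_mulVec, hUU, Matrix.one_mulVec]⟩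
    have h1 : x ⬝ᵥ (A *ᵥ x) = y ⬝ᵥ (Matrix.diagonal lam *ᵥ y) :=
      calc x ⬝ᵥ (A *ᵥ x) = (U *ᵥ y) ⬝ᵥ (A *ᵥ (U *ᵥ y)) := by rw [hx]
        _ = (U *ᵥ y) ⬝ᵥ (U *ᵥ (Matrix.diagonal lam *ᵥ y)) := by
            rw [Matrix.mulVec_mulVec, hAU, ← Matrix.mulVec_mulVec]
        _ = y ⬝ᵥ (Matrix.diagonal lam *ᵥ y) := hdot _ _
    have h2 : x ⬝ᵥ x = y ⬝ᵥ y :=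
      calc x ⬝ᵥ x = (U *ᵥ y) ⬝ᵥ (U *ᵥ y) := by rw [hx]
        _ = y ⬝ᵥ y := hdot _ _
    rw [h1, h2]
    simp only [dotProduct, Finset.mul_sum]
    apply Finset.sum_le_sum
    intro l _
    have hle : lam l ≤ lam i0 := hlam (by simp [hi0, Fin.le_def])
    have : y l * (Matrix.diagonal lam *ᵥ y) l = lam l * (y l * y l) := by
      rw [Matrix.mulVec_diagonal]; ring
    rw [this]
    have h3 : 0 ≤ y l * y l := mul_self_nonneg _
    nlinarith
  have hAnn : ∀ i j, 0 ≤ A i j := by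
    intro i j
    rw [hA, SimpleGraph.adjMatrix_apply]
    split <;> norm_num
  have habs : ∀ l, |lam l| ≤ lam i0 := by
    intro l
    set u : Fin n → ℝ := fun j => U j l with hu
    have hAu : A *ᵥ u = lam l • u := by
      funext j
      have h := congrFun (congrFun hAU j) l
      rw [Matrix.mul_apply, Matrix.mul_diagonal] at h
      simp only [Matrix.mulVec, dotProduct, hu, Pi.smul_apply, smul_eq_mul]
      rw [h]; ring
    have huu : u ⬝ᵥ u = 1 := by
      have h := congrFun (congrFun hU l) l
      rw [Matrix.mul_apply, Matrix.one_apply_eq] at h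
      simpa [dotProduct, hu, Matrix.transpose_apply] using h
    have hlaml : u ⬝ᵥ (A *ᵥ u) = lam l := by
      rw [hAu, dotProduct_smul, huu, smul_eq_mul, mul_one]
    set w : Fin n → ℝ := fun j => |u j| with hw
    have hww : w ⬝ᵥ w = 1 := by
      rw [← huu]
      exact Finset.sum_congr rfl fun j _ => abs_mul_abs_self _
    have hbound : |lam l| ≤ w ⬝ᵥ (A *ᵥ w) := by
      rw [← hlaml]
      calc |u ⬝ᵥ (A *ᵥ u)| = |∑ i, u i * (A *ᵥ u) i| := rfl
        _ ≤ ∑ i, |u i * (A *ᵥ u) i| := Finset.abs_sum_le_sum_abs _ _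
        _ ≤ ∑ i, w i * (A *ᵥ w) i := by
            apply Finset.sum_le_sum
            intro i _
            rw [abs_mul]
            apply mul_le_mul_of_nonneg_left _ (abs_nonneg _)
            calc |(A *ᵥ u) i| = |∑ j, A i j * u j| := rfl
              _ ≤ ∑ j, |A i j * u j| := Finset.abs_sum_le_sum_abs _ _
              _ = ∑ j, A i j * w j := by
                  exact Finset.sum_congr rfl fun j _ => by
                    rw [abs_mul, abs_of_nonneg (hAnn i j)]
              _ = (A *ᵥ w) i := rfl
        _ = w ⬝ᵥ (A *ᵥ w) := rfl
    have := hray w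
    rw [hww, mul_one] at this
    linarith
  have hρ : rho = lam i0 := by
    obtain ⟨⟨i, hi⟩, hub⟩ := hrho
    have h1 : lam i0 ≤ rho := le_trans (le_abs_self _) (hub ⟨i0, rfl⟩)
    have h2 : rho ≤ lam i0 := hi ▸ habs i
    linarith
  set d : Fin n → ℝ := fun l => if l = i0 then 0 else α l * (rho + lam l) with hd
  have hdnn : ∀ l, 0 ≤ d l := by
    intro l
    rw [hd]
    dsimp only
    split
    · exact le_refl 0
    · have h1 : |lam l| ≤ rho := hrho.2 ⟨l, rfl⟩
      have h2 := (abs_le.mp h1).1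
      have := hα l
      nlinarith
  have key : ∀ s : ℕ, rho * (m s - α i0 * rho ^ s) + (m (s + 1) - α i0 * rho ^ (s + 1))
      = ∑ l, d l * lam l ^ s := by
    intro s
    have expand : ∑ l, d l * lam l ^ s
        = (∑ l, α l * (rho + lam l) * lam l ^ s) - α i0 * (rho + lam i0) * lam i0 ^ s := by
      have h : ∀ l ∈ Finset.univ, d l * lam l ^ s
          = α l * (rho + lam l) * lam l ^ s
            - (if l = i0 then α l * (rho + lam l) * lam l ^ s else 0) := by
        intro l _
        rw [hd]
        dsimp only
        split <;> ring
      rw [Finset.sum_congr rfl h, Finset.sum_sub_distrib, Finset.sum_ite_eq' Finset.univ i0]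
      simp
    rw [expand, hm, hm, ← hρ]
    have h1 : ∑ l, α l * (rho + lam l) * lam l ^ s
        = rho * ∑ l, α l * lam l ^ s + ∑ l, α l * lam l ^ (s + 1) := by
      rw [Finset.mul_sum, ← Finset.sum_add_distrib]
      exact Finset.sum_congr rfl fun l _ => by ring
    rw [h1]; ring
  intro J
  have hentry : ∀ a b : J,
      rho * (m (a.1 + b.1) - α i0 * rho ^ (a.1 + b.1)) +
          (m (a.1 + b.1 + 1) - α i0 * rho ^ (a.1 + b.1 + 1))
        = ∑ l, d l * (lam l ^ (a.1 : ℕ) * lam l ^ (b.1 : ℕ)) := by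
    intro a b
    rw [key (a.1 + b.1)]
    exact Finset.sum_congr rfl fun l _ => by rw [pow_add]
  rw [Matrix.posSemidef_iff_dotProduct_mulVec]
  constructor
  · show _ = _
    ext a b
    rw [Matrix.conjTranspose_apply, Matrix.of_apply, Matrix.of_apply, star_trivial,
      hentry b a, hentry a b]
    exact Finset.sum_congr rfl fun l _ => by ring
  · intro x
    have hcalc : star x ⬝ᵥ ((Matrix.of fun a b : J =>
        rho * (m (a.1 + b.1) - α ⟨0, hn⟩ * rho ^ (a.1 + b.1)) +
          (m (a.1 + b.1 + 1) - α ⟨0, hn⟩ * rho ^ (a.1 + b.1 + 1))) *ᵥ x)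
        = ∑ l, d l * (∑ a : J, x a * lam l ^ (a.1 : ℕ)) ^ 2 := by
      have e1 : star x ⬝ᵥ ((Matrix.of fun a b : J =>
          rho * (m (a.1 + b.1) - α ⟨0, hn⟩ * rho ^ (a.1 + b.1)) +
            (m (a.1 + b.1 + 1) - α ⟨0, hn⟩ * rho ^ (a.1 + b.1 + 1))) *ᵥ x)
          = ∑ a : J, ∑ b : J, ∑ l,
          d l * ((x a * lam l ^ (a.1 : ℕ)) * (x b * lam l ^ (b.1 : ℕ))) := by
        simp only [dotProduct, Matrix.mulVec, Pi.star_apply, star_trivial,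
          Matrix.of_apply]
        refine Finset.sum_congr rfl fun a _ => ?_
        rw [Finset.mul_sum]
        refine Finset.sum_congr rfl fun b _ => ?_
        rw [hentry a b, Finset.sum_mul, Finset.mul_sum]
        exact Finset.sum_congr rfl fun l _ => by ring
      rw [e1]
      have e2 : (∑ a : J, ∑ b : J, ∑ l, d l * ((x a * lam l ^ (a.1 : ℕ)) *
          (x b * lam l ^ (b.1 : ℕ)))) = ∑ l, ∑ a : J, ∑ b : J,
          d l * ((x a * lam l ^ (a.1 : ℕ)) * (x b * lam l ^ (b.1 : ℕ))) :=
        calc (∑ a : J, ∑ b : J, ∑ l, d l * ((x a * lam l ^ (a.1 : ℕ)) *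
              (x b * lam l ^ (b.1 : ℕ))))
            = ∑ a : J, ∑ l, ∑ b : J, d l * ((x a * lam l ^ (a.1 : ℕ)) *
              (x b * lam l ^ (b.1 : ℕ))) :=
              Finset.sum_congr rfl fun a _ => Finset.sum_comm
          _ = ∑ l, ∑ a : J, ∑ b : J, d l * ((x a * lam l ^ (a.1 : ℕ)) *
              (x b * lam l ^ (b.1 : ℕ))) := Finset.sum_comm
      rw [e2]
      refine Finset.sum_congr rfl fun l _ => ?_
      rw [sq, Finset.sum_mul_sum, Finset.mul_sum]
      refine Finset.sum_congr rfl fun a _ => ?_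
      rw [Finset.mul_sum]
    rw [hcalc]
    exact Finset.sum_nonneg fun l _ => mul_nonneg (hdnn l) (sq_nonneg _)
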